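/- Let A be a finite Sidon set of integers with min A = 0, max A = n, |A| = k, and let T be a positive integer. Define S(A,T) = ∑_{r=1, r∉A−A}^{T−1} (T − r) and V(A,T) = ∑_{i=1}^{n+T} (A_i − kT/(T+n))², where A_i = |A ∩ [i−T, i)|. Then n = k²T²/(T(T + k − 1) − (2S(A,T) + V(A,T))) − T, provided the denominator is positive. -/

import Mathlib

/-- A finite set of integers is Sidon if `a + b = c + d` implies `{a,b} = {c,d}`. -/
def IsSidon (A : Finset ℤ) : Prop :=
  ∀ a ∈ A, ∀ b ∈ A, ∀ c ∈ A, ∀ d ∈ A,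
    a + b = c + d → (a = c ∧ b = d) ∨ (a = d ∧ b = c)

/-- The set of positive differences of elements of `X`. -/
def posDiffs (X : Finset ℤ) : Finset ℤ :=
  ((X ×ˢ X).filter (fun p => p.2 < p.1)).image (fun p => p.1 - p.2)

theorem stmt_10 (A : Finset ℤ) (hA : IsSidon A) (hne : A.Nonempty)
    (k : ℕ) (hk : A.card = k) (n : ℤ) (hmin : A.min' hne = 0) (hmax : A.max' hne = n)
    (T : ℤ) (hT : 0 < T)
    (S V : ℝ)
    (hS : S = ∑ r ∈ Finset.Icc 1 (T - 1),
        (if r ∉ posDiffs A then ((T - r : ℤ) : ℝ) else 0))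
    (hV : V = ∑ i ∈ Finset.Icc 1 (n + T),
        (((A.filter (fun m => i - T ≤ m ∧ m < i)).card : ℝ)
          - (k : ℝ) * T / ((T : ℝ) + n)) ^ 2)
    (hden : 0 < (T : ℝ) * ((T : ℝ) + (k : ℝ) - 1) - (2 * S + V)) :
    (n : ℝ) = (k : ℝ) ^ 2 * (T : ℝ) ^ 2
        / ((T : ℝ) * ((T : ℝ) + (k : ℝ) - 1) - (2 * S + V)) - T := by
  subst hk
  have h0A : (0:ℤ) ∈ A := hmin ▸ A.min'_mem hne
  have hbound : ∀ m ∈ A, 0 ≤ m ∧ m ≤ n := fun m hm =>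
    ⟨hmin ▸ A.min'_le m hm, hmax ▸ A.le_max' m hm⟩
  have hn : 0 ≤ n := (hbound 0 h0A).2
  -- integer version of S
  set Sz : ℤ := ∑ r ∈ Finset.Icc 1 (T - 1), (if r ∉ posDiffs A then T - r else 0) with hSz
  have hSR : S = (Sz : ℝ) := by
    rw [hS, hSz]; push_cast [apply_ite] ; rfl
  ---- Sum 1 : ∑ A_i = k T
  have expand : ∀ (i : ℤ), ((A.filter fun m => i - T ≤ m ∧ m < i).card : ℤ)
      = ∑ m ∈ A, (if i - T ≤ m ∧ m < i then (1:ℤ) else 0) := by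
    intro i; simp [Finset.sum_boole]
  have key1 : ∀ m ∈ A,
      ((Finset.Icc 1 (n+T)).filter (fun i => i - T ≤ m ∧ m < i)).card = T.toNat := by
    intro m hm
    have h1 := hbound m hm
    have heq : (Finset.Icc 1 (n+T)).filter (fun i => i - T ≤ m ∧ m < i)
        = Finset.Icc (m+1) (m+T) := by
      ext i
      simp only [Finset.mem_filter, Finset.mem_Icc]
      omega
    rw [heq, Int.card_Icc]
    congr 1; omega
  have hsum1 : ∑ i ∈ Finset.Icc 1 (n+T),
      ((A.filter fun m => i - T ≤ m ∧ m < i).card : ℤ) = A.card * T := by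
    simp only [expand]
    rw [Finset.sum_comm]
    have inner : ∀ m ∈ A,
        ∑ i ∈ Finset.Icc 1 (n+T), (if i - T ≤ m ∧ m < i then (1:ℤ) else 0) = T := by
      intro m hm
      have : ∑ i ∈ Finset.Icc 1 (n+T), (if i - T ≤ m ∧ m < i then (1:ℤ) else 0)
          = (((Finset.Icc 1 (n+T)).filter (fun i => i - T ≤ m ∧ m < i)).card : ℤ) := by
        simp [Finset.sum_boole]
      rw [this, key1 m hm]
      omega
    rw [Finset.sum_congr rfl inner, Finset.sum_const, nsmul_eq_mul]
  ---- Sum 2 : ∑ A_i² = T(T+k-1) - 2 Sz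
  have key2 : ∀ a ∈ A, ∀ b ∈ A,
      (((Finset.Icc 1 (n+T)).filter
        (fun i => (i - T ≤ a ∧ a < i) ∧ (i - T ≤ b ∧ b < i))).card : ℤ)
      = max (min a b + T - max a b) 0 := by
    intro a ha b hb
    have h1 := hbound a ha
    have h2 := hbound b hb
    have heq : (Finset.Icc 1 (n+T)).filter
        (fun i => (i - T ≤ a ∧ a < i) ∧ (i - T ≤ b ∧ b < i))
        = Finset.Icc (max a b + 1) (min a b + T) := by
      ext i
      simp only [Finset.mem_filter, Finset.mem_Icc]
      omega
    rw [heq, Int.card_Icc]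
    omega
  have expand2 : ∀ i : ℤ, ((A.filter fun m => i - T ≤ m ∧ m < i).card : ℤ)^2
      = ∑ a ∈ A, ∑ b ∈ A,
        (if (i - T ≤ a ∧ a < i) ∧ (i - T ≤ b ∧ b < i) then (1:ℤ) else 0) := by
    intro i
    rw [expand, sq, Finset.sum_mul_sum]
    refine Finset.sum_congr rfl fun a _ => Finset.sum_congr rfl fun b _ => ?_
    split_ifs <;> omega
  have hsum2' : ∑ i ∈ Finset.Icc 1 (n+T),
      ((A.filter fun m => i - T ≤ m ∧ m < i).card : ℤ)^2
      = ∑ a ∈ A, ∑ b ∈ A, max (min a b + T - max a b) 0 := by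
    simp only [expand2]
    rw [Finset.sum_comm]
    refine Finset.sum_congr rfl fun a ha => ?_
    rw [Finset.sum_comm]
    refine Finset.sum_congr rfl fun b hb => ?_
    have : ∑ i ∈ Finset.Icc 1 (n+T),
        (if (i - T ≤ a ∧ a < i) ∧ (i - T ≤ b ∧ b < i) then (1:ℤ) else 0)
        = (((Finset.Icc 1 (n+T)).filter
            (fun i => (i - T ≤ a ∧ a < i) ∧ (i - T ≤ b ∧ b < i))).card : ℤ) := by
      simp [Finset.sum_boole]
    rw [this, key2 a ha b hb]
  -- split the double sum over A ×ˢ A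
  have hprod : ∑ a ∈ A, ∑ b ∈ A, max (min a b + T - max a b) 0
      = ∑ p ∈ A ×ˢ A, max (min p.1 p.2 + T - max p.1 p.2) 0 := by
    rw [Finset.sum_product]
  -- diagonal
  have hdiagset : (A ×ˢ A).filter (fun p => ¬ p.2 < p.1 ∧ ¬ p.1 < p.2)
      = A.image (fun a => (a, a)) := by
    ext ⟨x, y⟩
    simp only [Finset.mem_filter, Finset.mem_product, Finset.mem_image, Prod.mk.injEq]
    constructor
    · rintro ⟨⟨hx, hy⟩, h1, h2⟩
      exact ⟨x, hx, rfl, by omega⟩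
    · rintro ⟨a, ha, rfl, rfl⟩
      exact ⟨⟨ha, ha⟩, by omega, by omega⟩
  have hdiag : ∑ p ∈ (A ×ˢ A).filter (fun p => ¬ p.2 < p.1 ∧ ¬ p.1 < p.2),
      max (min p.1 p.2 + T - max p.1 p.2) 0 = A.card * T := by
    rw [hdiagset, Finset.sum_image (by intro x _ y _ h; exact (Prod.mk.injEq .. ▸ h).1)]
    have : ∀ a ∈ A, max (min a a + T - max a a) 0 = T := by
      intro a _; simp; omega
    rw [Finset.sum_congr rfl this, Finset.sum_const, nsmul_eq_mul]
  -- upper triangle = sum over posDiffs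
  have hupper : ∑ p ∈ (A ×ˢ A).filter (fun p => p.2 < p.1),
      max (min p.1 p.2 + T - max p.1 p.2) 0
      = ∑ r ∈ posDiffs A, max (T - r) 0 := by
    rw [posDiffs, Finset.sum_image]
    · refine Finset.sum_congr rfl fun p hp => ?_
      simp only [Finset.mem_filter] at hp
      have : min p.1 p.2 = p.2 ∧ max p.1 p.2 = p.1 := by
        constructor <;> omega
      rw [this.1, this.2]
      congr 1; ring
    · rintro ⟨a, b⟩ hp ⟨c, d⟩ hq h
      simp only [Finset.mem_coe, Finset.mem_filter, Finset.mem_product] at hp hq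
      beta_reduce at h
      have := hA a hp.1.1 d hq.1.2 c hq.1.1 b hp.1.2 (by omega)
      rcases this with ⟨h1, h2⟩ | ⟨h1, h2⟩
      · simp only [Prod.mk.injEq]; omega
      · omega
  -- lower triangle equals upper triangle
  have hlower : ∑ p ∈ (A ×ˢ A).filter (fun p => ¬ p.2 < p.1 ∧ p.1 < p.2),
      max (min p.1 p.2 + T - max p.1 p.2) 0
      = ∑ p ∈ (A ×ˢ A).filter (fun p => p.2 < p.1),
        max (min p.1 p.2 + T - max p.1 p.2) 0 := by
    refine Finset.sum_nbij' (fun p => (p.2, p.1)) (fun p => (p.2, p.1)) ?_ ?_ ?_ ?_ ?_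
    · rintro ⟨a, b⟩ hp
      simp only [Finset.mem_filter, Finset.mem_product] at hp ⊢
      exact ⟨⟨hp.1.2, hp.1.1⟩, hp.2.2⟩
    · rintro ⟨a, b⟩ hp
      simp only [Finset.mem_filter, Finset.mem_product] at hp ⊢
      exact ⟨⟨hp.1.2, hp.1.1⟩, by omega, by omega⟩
    · rintro ⟨a, b⟩ _; rfl
    · rintro ⟨a, b⟩ _; rfl
    · rintro ⟨a, b⟩ _
      simp only []
      omega
  -- assemble the split
  have hsplit : ∑ p ∈ A ×ˢ A, max (min p.1 p.2 + T - max p.1 p.2) 0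
      = A.card * T + 2 * ∑ r ∈ posDiffs A, max (T - r) 0 := by
    rw [← Finset.sum_filter_add_sum_filter_not (A ×ˢ A) (fun p => p.2 < p.1)]
    have : (A ×ˢ A).filter (fun p => ¬ p.2 < p.1)
        = ((A ×ˢ A).filter (fun p => ¬ p.2 < p.1)).filter (fun p => p.1 < p.2)
          ∪ ((A ×ˢ A).filter (fun p => ¬ p.2 < p.1)).filter (fun p => ¬ p.1 < p.2) := by
      rw [Finset.filter_union_filter_not_eq]
    rw [this, Finset.sum_union (Finset.disjoint_filter_filter_not _ _ _),
      Finset.filter_filter, Finset.filter_filter]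
    rw [hlower, hupper, hdiag]
    ring
  -- sum over posDiffs in terms of Sz
  have hpos1 : ∀ r ∈ posDiffs A, 1 ≤ r := by
    intro r hr
    simp only [posDiffs, Finset.mem_image, Finset.mem_filter] at hr
    obtain ⟨p, hp, rfl⟩ := hr
    omega
  have hposS : ∑ r ∈ posDiffs A, max (T - r) 0
      = (∑ r ∈ Finset.Icc 1 (T-1), (T - r)) - Sz := by
    have step2 : ∑ r ∈ posDiffs A, max (T - r) 0
        = ∑ r ∈ posDiffs A, (if r ∈ Finset.Icc 1 (T-1) then T - r else 0) := by
      refine Finset.sum_congr rfl fun r hr => ?_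
      have h1 := hpos1 r hr
      by_cases h : r ∈ Finset.Icc 1 (T-1)
      · simp only [h, if_true]
        rw [Finset.mem_Icc] at h; omega
      · simp only [h, if_false]
        rw [Finset.mem_Icc] at h; omega
    rw [step2, Finset.sum_ite_mem, Finset.inter_comm, ← Finset.sum_ite_mem]
    rw [hSz, ← Finset.sum_sub_distrib]
    refine Finset.sum_congr rfl fun r _ => ?_
    by_cases h : r ∈ posDiffs A <;> simp [h]
  -- Gauss sum
  have hW : 2 * (∑ r ∈ Finset.Icc 1 (T-1), (T - r)) = T * (T - 1) := by
    have himg : (Finset.Icc 1 (T-1)).image (fun r => T - r) = Finset.Icc 1 (T-1) := by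
      ext x
      simp only [Finset.mem_image, Finset.mem_Icc]
      constructor
      · rintro ⟨r, hr, rfl⟩; omega
      · intro hx; exact ⟨T - x, by omega, by ring⟩
    have hrefl : ∑ r ∈ Finset.Icc 1 (T-1), (T - r) = ∑ r ∈ Finset.Icc 1 (T-1), r := by
      conv_rhs => rw [← himg]
      rw [Finset.sum_image (by intro x _ y _ h; beta_reduce at h; omega)]
    have hcard : ((Finset.Icc (1:ℤ) (T-1)).card : ℤ) = T - 1 := by
      rw [Int.card_Icc]; omega
    calc 2 * (∑ r ∈ Finset.Icc 1 (T-1), (T - r))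
        = ∑ r ∈ Finset.Icc 1 (T-1), ((T - r) + r) := by
          rw [Finset.sum_add_distrib, ← hrefl]; ring
      _ = ∑ r ∈ Finset.Icc 1 (T-1), T := Finset.sum_congr rfl (fun r _ => by ring)
      _ = T * (T - 1) := by rw [Finset.sum_const, nsmul_eq_mul, hcard]; ring
  have hsum2 : ∑ i ∈ Finset.Icc 1 (n+T),
      ((A.filter fun m => i - T ≤ m ∧ m < i).card : ℤ)^2
      = T * (T + A.card - 1) - 2 * Sz := by
    rw [hsum2', hprod, hsplit, hposS]
    have := hW
    ring_nf
    ring_nf at this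
    omega
  ---- now the real computation
  have hNpos : (0:ℝ) < (T:ℝ) + n := by
    have h : (0:ℤ) < T + n := by omega
    exact_mod_cast h
  have hs1R : ∑ i ∈ Finset.Icc 1 (n+T),
      ((A.filter fun m => i - T ≤ m ∧ m < i).card : ℝ) = (A.card : ℝ) * T := by
    exact_mod_cast hsum1
  have hs2R : ∑ i ∈ Finset.Icc 1 (n+T),
      ((A.filter fun m => i - T ≤ m ∧ m < i).card : ℝ)^2
      = (T:ℝ) * ((T:ℝ) + A.card - 1) - 2 * S := by
    rw [hSR]
    exact_mod_cast hsum2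
  have hcardI : ((Finset.Icc (1:ℤ) (n+T)).card : ℝ) = (T:ℝ) + n := by
    rw [Int.card_Icc]
    have h1 : ((n + T + 1 - 1).toNat : ℤ) = T + n := by omega
    exact_mod_cast h1
  set c : ℝ := (A.card : ℝ) * T / ((T:ℝ) + n) with hc
  have hVval : V = ((T:ℝ) * ((T:ℝ) + A.card - 1) - 2 * S)
      - ((A.card:ℝ) * T)^2 / ((T:ℝ) + n) := by
    rw [hV]
    have hexp : ∀ i ∈ Finset.Icc 1 (n+T),
        (((A.filter fun m => i - T ≤ m ∧ m < i).card : ℝ) - c)^2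
        = ((A.filter fun m => i - T ≤ m ∧ m < i).card : ℝ)^2
          - 2 * c * ((A.filter fun m => i - T ≤ m ∧ m < i).card : ℝ) + c^2 :=
      fun i _ => by ring
    rw [Finset.sum_congr rfl hexp, Finset.sum_add_distrib, Finset.sum_sub_distrib,
      ← Finset.mul_sum, hs1R, hs2R, Finset.sum_const, nsmul_eq_mul, hcardI, hc]
    field_simp
    ring
  have hden' : (T:ℝ) * ((T:ℝ) + A.card - 1) - (2 * S + V)
      = ((A.card:ℝ) * T)^2 / ((T:ℝ) + n) := by
    rw [hVval]; ring
  rw [hden'] at hden ⊢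
  have hne0 : ((A.card:ℝ) * T)^2 / ((T:ℝ) + n) ≠ 0 := ne_of_gt hden
  rw [eq_sub_iff_add_eq, eq_div_iff hne0]
  field_simp
  ring
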